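/- If r < σ²/2 (so that α < 0) and L > 0, then the function g is strictly decreasing on the interval (max{1, L}, ∞); in fact g'(y) = (2λ/(σ² y²))(L − y)((p₁ − 1)y^{p₁} + (1 − p₂)y^{p₂}) + (α/y²)((2λ/σ²)(y − L)(y^{p₁} − y^{p₂}) + L(p₁ y^{p₂} − p₂ y^{p₁})) < 0 for every y > max{1, L}. -/
import Mathlib


set_option maxHeartbeats 2000000 in
/-- If `r < σ²/2` (so `α < 0`) and `L > 0`, then `g` is strictly
decreasing on `(max 1 L, ∞)`; in fact
`g'(y) = (2λ/(σ²y²))(L − y)((p₁ − 1)y^(p₁) + (1 − p₂)y^(p₂))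
        + (α/y²)((2λ/σ²)(y − L)(y^(p₁) − y^(p₂)) + L(p₁ y^(p₂) − p₂ y^(p₁))) < 0`
for every `y > max 1 L`. -/
theorem stmt_6 (r σ lam α p₁ p₂ L : ℝ) (g : ℝ → ℝ)
    (hr : 0 < r) (hσ : 0 < σ) (hlam : 0 < lam)
    (hα : α = 2*r/σ^2 - 1)
    (hp₁ : p₁ = ((r + σ^2/2) + Real.sqrt ((r + σ^2/2)^2 + 2*lam*σ^2)) / σ^2)
    (hp₂ : p₂ = ((r + σ^2/2) - Real.sqrt ((r + σ^2/2)^2 + 2*lam*σ^2)) / σ^2)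
    (hdrift : r < σ^2/2) (hL : 0 < L)
    (hg : ∀ y : ℝ, g y = (α+1) * (p₁ * y^p₂ - p₂ * y^p₁)
      - α * L * (p₁ * y^(p₂-1) - p₂ * y^(p₁-1))
      - p₁ * p₂ * (y - L) * (y^(p₂-1) - y^(p₁-1))) :
    StrictAntiOn g (Set.Ioi (max 1 L)) ∧
    ∀ y : ℝ, max 1 L < y →
      deriv g y = (2*lam/(σ^2 * y^2)) * (L - y) * ((p₁ - 1) * y^p₁ + (1 - p₂) * y^p₂)
          + (α/y^2) * ((2*lam/σ^2) * (y - L) * (y^p₁ - y^p₂) + L * (p₁ * y^p₂ - p₂ * y^p₁)) ∧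
      (2*lam/(σ^2 * y^2)) * (L - y) * ((p₁ - 1) * y^p₁ + (1 - p₂) * y^p₂)
          + (α/y^2) * ((2*lam/σ^2) * (y - L) * (y^p₁ - y^p₂) + L * (p₁ * y^p₂ - p₂ * y^p₁)) < 0 := by
  have hσ2 : (0:ℝ) < σ^2 := by positivity
  set D := Real.sqrt ((r + σ^2/2)^2 + 2*lam*σ^2) with hD
  have hDsq : D^2 = (r + σ^2/2)^2 + 2*lam*σ^2 := Real.sq_sqrt (by positivity)
  have hDnn : 0 ≤ D := Real.sqrt_nonneg _
  have hDgt : r + σ^2/2 < D := by nlinarith [mul_pos hlam hσ2]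
  have hsum : p₁ + p₂ = α + 2 := by rw [hp₁, hp₂, hα]; field_simp; ring
  have hprod : p₁ * p₂ * σ^2 = -(2*lam) := by
    have : p₁ * p₂ = -(2*lam)/σ^2 := by
      rw [hp₁, hp₂]; field_simp; nlinarith [hDsq]
    rw [this]; field_simp
  have hp1gt : 1 < p₁ := by
    rw [hp₁, lt_div_iff₀ hσ2]; linarith
  have hp2neg : p₂ < 0 := by
    rw [hp₂]; apply div_neg_of_neg_of_pos _ hσ2; linarith
  have hαneg : α < 0 := by
    rw [hα]; have : 2*r/σ^2 < 1 := by rw [div_lt_one hσ2]; linarith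
    linarith
  have key : ∀ y : ℝ, 0 < y → HasDerivAt g
      ((2*lam/(σ^2 * y^2)) * (L - y) * ((p₁ - 1) * y^p₁ + (1 - p₂) * y^p₂)
        + (α/y^2) * ((2*lam/σ^2) * (y - L) * (y^p₁ - y^p₂) + L * (p₁ * y^p₂ - p₂ * y^p₁))) y := by
    intro y hy
    have hyne : y ≠ 0 := hy.ne'
    have h1 : HasDerivAt (fun x:ℝ => x^p₂) (p₂ * y^(p₂-1)) y :=
      Real.hasDerivAt_rpow_const (Or.inl hyne)
    have h2 : HasDerivAt (fun x:ℝ => x^p₁) (p₁ * y^(p₁-1)) y :=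
      Real.hasDerivAt_rpow_const (Or.inl hyne)
    have h3 : HasDerivAt (fun x:ℝ => x^(p₂-1)) ((p₂-1) * y^(p₂-1-1)) y :=
      Real.hasDerivAt_rpow_const (Or.inl hyne)
    have h4 : HasDerivAt (fun x:ℝ => x^(p₁-1)) ((p₁-1) * y^(p₁-1-1)) y :=
      Real.hasDerivAt_rpow_const (Or.inl hyne)
    have h5 : HasDerivAt (fun x:ℝ => x - L) 1 y := (hasDerivAt_id y).sub_const L
    have H : HasDerivAt (fun x:ℝ => (α+1) * (p₁ * x^p₂ - p₂ * x^p₁)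
        - α * L * (p₁ * x^(p₂-1) - p₂ * x^(p₁-1))
        - p₁ * p₂ * ((x - L) * (x^(p₂-1) - x^(p₁-1))))
        ((α+1) * (p₁ * (p₂ * y^(p₂-1)) - p₂ * (p₁ * y^(p₁-1)))
          - α * L * (p₁ * ((p₂-1) * y^(p₂-1-1)) - p₂ * ((p₁-1) * y^(p₁-1-1)))
          - p₁ * p₂ * (1 * (y^(p₂-1) - y^(p₁-1))
              + (y - L) * ((p₂-1) * y^(p₂-1-1) - (p₁-1) * y^(p₁-1-1)))) y :=
      ((((h1.const_mul p₁).sub (h2.const_mul p₂)).const_mul (α+1)).sub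
        (((h3.const_mul p₁).sub (h4.const_mul p₂)).const_mul (α*L))).sub
        ((h5.mul (h3.sub h4)).const_mul (p₁*p₂))
    have hgf : g = fun x:ℝ => (α+1) * (p₁ * x^p₂ - p₂ * x^p₁)
        - α * L * (p₁ * x^(p₂-1) - p₂ * x^(p₁-1))
        - p₁ * p₂ * ((x - L) * (x^(p₂-1) - x^(p₁-1))) :=
      funext fun x => by rw [hg x]; ring
    have Hg := hgf ▸ H
    have e1 : y^(p₁-1) = y^p₁/y := by rw [Real.rpow_sub hy, Real.rpow_one]
    have e2 : y^(p₂-1) = y^p₂/y := by rw [Real.rpow_sub hy, Real.rpow_one]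
    have e3 : y^(p₁-1-1) = y^p₁/y/y := by
      rw [Real.rpow_sub hy, Real.rpow_sub hy, Real.rpow_one]
    have e4 : y^(p₂-1-1) = y^p₂/y/y := by
      rw [Real.rpow_sub hy, Real.rpow_sub hy, Real.rpow_one]
    have hαs : α = p₁ + p₂ - 2 := by linarith
    have hlam2 : lam = -(p₁ * p₂ * σ^2)/2 := by linarith
    convert Hg using 1
    rw [e1, e2, e3, e4, hαs, hlam2]
    field_simp
    ring
  have negkey : ∀ y : ℝ, max 1 L < y →
      (2*lam/(σ^2 * y^2)) * (L - y) * ((p₁ - 1) * y^p₁ + (1 - p₂) * y^p₂)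
        + (α/y^2) * ((2*lam/σ^2) * (y - L) * (y^p₁ - y^p₂) + L * (p₁ * y^p₂ - p₂ * y^p₁)) < 0 := by
    intro y hy
    have hy1 : 1 < y := lt_of_le_of_lt (le_max_left 1 L) hy
    have hyL : L < y := lt_of_le_of_lt (le_max_right 1 L) hy
    have hy0 : 0 < y := lt_trans one_pos hy1
    have hA : (0:ℝ) < y^p₁ := Real.rpow_pos_of_pos hy0 _
    have hB : (0:ℝ) < y^p₂ := Real.rpow_pos_of_pos hy0 _
    have hAB : y^p₂ < y^p₁ :=
      (Real.rpow_lt_rpow_left_iff hy1).mpr (by linarith)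
    have t1 : (2*lam/(σ^2 * y^2)) * (L - y) * ((p₁ - 1) * y^p₁ + (1 - p₂) * y^p₂) < 0 := by
      apply mul_neg_of_neg_of_pos
      · exact mul_neg_of_pos_of_neg (by positivity) (by linarith)
      · have h1 := mul_pos (show (0:ℝ) < p₁ - 1 by linarith) hA
        have h2 := mul_pos (show (0:ℝ) < 1 - p₂ by linarith) hB
        linarith
    have t2 : (α/y^2) * ((2*lam/σ^2) * (y - L) * (y^p₁ - y^p₂)
        + L * (p₁ * y^p₂ - p₂ * y^p₁)) < 0 := by
      apply mul_neg_of_neg_of_pos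
      · exact div_neg_of_neg_of_pos hαneg (by positivity)
      · have h1 : 0 < (2*lam/σ^2) * (y - L) * (y^p₁ - y^p₂) := by
          apply mul_pos (mul_pos (by positivity) (by linarith)) (by linarith)
        have h2 : 0 < L * (p₁ * y^p₂ - p₂ * y^p₁) := by
          have := mul_pos (show (0:ℝ) < p₁ by linarith) hB
          have := mul_pos (show (0:ℝ) < -p₂ by linarith) hA
          apply mul_pos hL; nlinarith
        linarith
    linarith
  constructor
  · apply strictAntiOn_of_deriv_neg (convex_Ioi _)
    · intro y hy
      have hy0 : 0 < y := lt_trans one_pos (lt_of_le_of_lt (le_max_left 1 L) hy)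
      exact (key y hy0).differentiableAt.continuousAt.continuousWithinAt
    · intro y hy
      rw [interior_Ioi] at hy
      have hy0 : 0 < y := lt_trans one_pos (lt_of_le_of_lt (le_max_left 1 L) hy)
      rw [(key y hy0).deriv]
      exact negkey y hy
  · intro y hy
    have hy0 : 0 < y := lt_trans one_pos (lt_of_le_of_lt (le_max_left 1 L) hy)
    exact ⟨(key y hy0).deriv, negkey y hy⟩
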